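/- arXiv:1606.08943 — 5 statements merged into one kernel-verified Lean document; each statement's English description precedes it below -/
import Mathlib

section
/- Let R = (<₁, <₂, <₃) be a standard representation of a finite set V with |V| ≥ 3, with <ᵢ-maximum elements a₁, a₂, a₃. Then a₃ is the <₂-minimum element of the set of neighbors of a₁ in Σ₂(R), and a₂ is the <₂-maximum element of the set of neighbors of a₁ in Σ₂(R). -/
open SimpleGraph

variable {V : Type*}

/-- The graph Σ₂(R) for a triple of linear orders R = (l₁, l₂, l₃) on V:
`x` and `y` are adjacent iff every other vertex `z` lies above both `x` and `y`
in one of the three orders. -/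
def Sigma2 (l₁ l₂ l₃ : LinearOrder V) : SimpleGraph V where
  Adj x y := x ≠ y ∧ ∀ z, z ≠ x → z ≠ y →
    (l₁.lt x z ∧ l₁.lt y z) ∨ (l₂.lt x z ∧ l₂.lt y z) ∨ (l₃.lt x z ∧ l₃.lt y z)
  symm := by
    constructor
    rintro x y ⟨hxy, h⟩
    exact ⟨hxy.symm, fun z hzy hzx => by rcases h z hzx hzy with h|h|h <;> tauto⟩
  loopless := ⟨fun x h => h.1 rfl⟩

/-- The three orders have empty intersection: for distinct x, y, some order has x below y. -/
def IsRep (l₁ l₂ l₃ : LinearOrder V) : Prop :=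
  ∀ x y : V, x ≠ y → l₁.lt x y ∨ l₂.lt x y ∨ l₃.lt x y

/-- `a` is the maximum element of the linear order `l`. -/
def IsMaxOf (l : LinearOrder V) (a : V) : Prop := ∀ x, x ≠ a → l.lt x a

/-- `a` is among the two smallest elements of `l`: at most one element lies below `a`. -/
def AmongTwoSmallest (l : LinearOrder V) (a : V) : Prop :=
  ∀ x y, l.lt x a → l.lt y a → x = y

/-- `R = (l₁, l₂, l₃)` is a standard representation with `<ᵢ`-maxima `a₁, a₂, a₃`. -/
structure IsStdRep (l₁ l₂ l₃ : LinearOrder V) (a₁ a₂ a₃ : V) : Prop where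
  rep : IsRep l₁ l₂ l₃
  top₁ : IsMaxOf l₁ a₁
  top₂ : IsMaxOf l₂ a₂
  top₃ : IsMaxOf l₃ a₃
  a₁_small₂ : AmongTwoSmallest l₂ a₁
  a₁_small₃ : AmongTwoSmallest l₃ a₁
  a₂_small₁ : AmongTwoSmallest l₁ a₂
  a₂_small₃ : AmongTwoSmallest l₃ a₂
  a₃_small₁ : AmongTwoSmallest l₁ a₃
  a₃_small₂ : AmongTwoSmallest l₂ a₃

/-- The restriction of a linear order on `V` to `V \ {b}`. -/
def restrictOrder (l : LinearOrder V) (b : V) : LinearOrder {x : V // x ≠ b} :=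
  @LinearOrder.lift' _ _ l Subtype.val Subtype.val_injective

theorem two_others {V : Type*} [Fintype V] (hV : 3 ≤ Fintype.card V) (a : V) :
    ∃ x y : V, x ≠ y ∧ x ≠ a ∧ y ≠ a := by
  classical
  have h2 : 1 < (Finset.univ.erase a).card := by
    have h := Finset.card_erase_of_mem (Finset.mem_univ a)
    rw [Finset.card_univ] at h
    omega
  obtain ⟨x, hx, y, hy, hxy⟩ := Finset.one_lt_card.mp h2
  exact ⟨x, y, hxy, (Finset.mem_erase.mp hx).1, (Finset.mem_erase.mp hy).1⟩

theorem ne_of_top_small {V : Type*} [Fintype V] (hV : 3 ≤ Fintype.card V)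
    {l : LinearOrder V} {a b : V} (htop : IsMaxOf l b) (hsmall : AmongTwoSmallest l a) :
    a ≠ b := by
  intro h
  subst h
  obtain ⟨x, y, hxy, hxa, hya⟩ := two_others hV a
  exact hxy (hsmall x y (htop x hxa) (htop y hya))

theorem below_both {V : Type*} {l : LinearOrder V} {a b : V} (hab : a ≠ b)
    (ha : AmongTwoSmallest l a) (hb : AmongTwoSmallest l b)
    {z : V} (hza : z ≠ a) (hzb : z ≠ b) : l.lt a z ∧ l.lt b z := by
  rcases @lt_or_gt_of_ne V l a z hza.symm with h1 | h1
  · rcases @lt_or_gt_of_ne V l b z hzb.symm with h2 | h2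
    · exact ⟨h1, h2⟩
    · rcases @lt_or_gt_of_ne V l a b hab with h3 | h3
      · exact absurd (hb z a h2 h3) hza
      · exact absurd (ha z b (@lt_trans V l.toPreorder _ _ _ h2 h3) h3) hzb
  · rcases @lt_or_gt_of_ne V l a b hab with h3 | h3
    · exact absurd (hb z a (@lt_trans V l.toPreorder _ _ _ h1 h3) h3) hza
    · exact absurd (ha z b h1 h3) hzb

/-- a₃ is the <₂-minimum neighbor of a₁ in Σ₂(R), and a₂ is the
<₂-maximum neighbor of a₁ in Σ₂(R). -/
theorem stmt2 {V : Type*} [Fintype V] (hV : 3 ≤ Fintype.card V)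
    (l₁ l₂ l₃ : LinearOrder V) (a₁ a₂ a₃ : V)
    (hR : IsStdRep l₁ l₂ l₃ a₁ a₂ a₃) :
    ((Sigma2 l₁ l₂ l₃).Adj a₁ a₃ ∧
        ∀ w, (Sigma2 l₁ l₂ l₃).Adj a₁ w → w ≠ a₃ → l₂.lt a₃ w) ∧
      ((Sigma2 l₁ l₂ l₃).Adj a₁ a₂ ∧
        ∀ w, (Sigma2 l₁ l₂ l₃).Adj a₁ w → w ≠ a₂ → l₂.lt w a₂) := by
  have h13 : a₁ ≠ a₃ := ne_of_top_small hV hR.top₃ hR.a₁_small₃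
  have h12 : a₁ ≠ a₂ := ne_of_top_small hV hR.top₂ hR.a₁_small₂
  refine ⟨⟨⟨h13, fun z hz1 hz3 => Or.inr (Or.inl
      (below_both h13 hR.a₁_small₂ hR.a₃_small₂ hz1 hz3))⟩, ?_⟩,
    ⟨⟨h12, fun z hz1 hz2 => Or.inr (Or.inr
      (below_both h12 hR.a₁_small₃ hR.a₂_small₃ hz1 hz2))⟩, ?_⟩⟩
  · intro w hw hw3
    have hw1 : w ≠ a₁ := fun h => (Sigma2 l₁ l₂ l₃).loopless.irrefl a₁ (h ▸ hw)
    rcases @lt_or_gt_of_ne V l₂ a₃ w hw3.symm with h | h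
    · exact h
    · exfalso
      rcases @lt_or_gt_of_ne V l₂ a₁ a₃ h13 with h3 | h3
      · exact hw1 (hR.a₃_small₂ w a₁ h h3)
      · exact hw3 (hR.a₁_small₂ w a₃ (@lt_trans V l₂.toPreorder _ _ _ h h3) h3)
  · intro w _ hw2
    exact hR.top₂ w hw2
end

section
/- Let R = (<₁, <₂, <₃) be a standard representation of a finite set V with |V| ≥ 3, with <ᵢ-maximum elements a₁, a₂, a₃. If w and w' are <₂-consecutive neighbors of a₁ in Σ₂(R), then ww' is an edge of Σ₂(R). -/
open SimpleGraph

variable {V : Type*}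

/-- If w, w' are <₂-consecutive neighbors of a₁ in Σ₂(R), then ww' is an
edge of Σ₂(R). -/
theorem stmt4 {V : Type*} [Fintype V] (hV : 3 ≤ Fintype.card V)
    (l₁ l₂ l₃ : LinearOrder V) (a₁ a₂ a₃ : V)
    (hR : IsStdRep l₁ l₂ l₃ a₁ a₂ a₃)
    (w w' : V) (hw : (Sigma2 l₁ l₂ l₃).Adj a₁ w) (hw' : (Sigma2 l₁ l₂ l₃).Adj a₁ w')
    (hlt : l₂.lt w w')
    (hcons : ∀ u, (Sigma2 l₁ l₂ l₃).Adj a₁ u → ¬(l₂.lt w u ∧ l₂.lt u w')) :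
    (Sigma2 l₁ l₂ l₃).Adj w w' := by
  classical
  obtain ⟨hne_w, hw2⟩ := hw
  obtain ⟨hne_w', hw'2⟩ := hw'
  have t2 : ∀ {x y z : V}, l₂.lt x y → l₂.lt y z → l₂.lt x z :=
    fun h h' => @lt_trans _ l₂.toPreorder _ _ _ h h'
  have t3 : ∀ {x y z : V}, l₃.lt x y → l₃.lt y z → l₃.lt x z :=
    fun h h' => @lt_trans _ l₃.toPreorder _ _ _ h h'
  have as1 : ∀ {x y : V}, l₁.lt x y → ¬ l₁.lt y x :=
    fun h h' => @lt_asymm _ l₁.toPreorder _ _ h h'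
  have ne2 : ∀ {x y : V}, l₂.lt x y → x ≠ y := fun h => @ne_of_lt _ l₂.toPreorder _ _ h
  have tri2 : ∀ x y : V, l₂.lt x y ∨ x = y ∨ l₂.lt y x := fun x y => @lt_trichotomy _ l₂ x y
  have tri3 : ∀ x y : V, l₃.lt x y ∨ x = y ∨ l₃.lt y x := fun x y => @lt_trichotomy _ l₃ x y
  set B : Set V := {z | l₂.lt a₁ z ∧ l₂.lt w z ∧ l₂.lt z w' ∧ l₃.lt a₁ z ∧
    l₃.lt w' z ∧ l₃.lt z w} with hBdef
  have hBempty : ∀ z, z ∉ B := by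
    intro z₀ hz₀
    obtain ⟨z, hzB, hzmax⟩ : ∃ z ∈ B, ∀ u ∈ B, l₁.le z u → l₁.le u z := by
      letI : Preorder V := l₁.toPreorder
      exact Set.Finite.exists_maximalFor id B (Set.toFinite B) ⟨z₀, hz₀⟩
    obtain ⟨hz2a, hz2w, hz2w', hz3a, hz3w', hz3w⟩ := hzB
    refine hcons z ⟨ne2 hz2a, fun u hua huz => ?_⟩ ⟨hz2w, hz2w'⟩
    rcases eq_or_ne u w with rfl | huw
    · exact Or.inr (Or.inr ⟨t3 hz3a hz3w, hz3w⟩)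
    rcases eq_or_ne u w' with rfl | huw'
    · exact Or.inr (Or.inl ⟨t2 hz2a hz2w', hz2w'⟩)
    have hnot1 : ¬ l₁.lt a₁ u := as1 (hR.top₁ u hua)
    rcases hw2 u hua huw with ⟨h, _⟩ | ⟨h2a, h2w⟩ | ⟨h3a, h3w⟩
    · exact absurd h hnot1
    · rcases hw'2 u hua huw' with ⟨h, _⟩ | ⟨_, k2w'⟩ | ⟨k3a, k3w'⟩
      · exact absurd h hnot1
      · exact Or.inr (Or.inl ⟨h2a, t2 hz2w' k2w'⟩)
      · rcases tri2 w' u with h | h | h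
        · exact Or.inr (Or.inl ⟨h2a, t2 hz2w' h⟩)
        · exact absurd h.symm huw'
        · rcases tri3 w u with h' | h' | h'
          · exact Or.inr (Or.inr ⟨k3a, t3 hz3w h'⟩)
          · exact absurd h'.symm huw
          · have huB : u ∈ B := ⟨h2a, h2w, h, k3a, k3w', h'⟩
            rcases hR.rep z u huz.symm with hz1 | hz2 | hz3
            · exact absurd (hzmax u huB (@le_of_lt _ l₁.toPreorder _ _ hz1)) (@not_le_of_gt _ l₁.toPreorder _ _ hz1)
            · exact Or.inr (Or.inl ⟨h2a, hz2⟩)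
            · exact Or.inr (Or.inr ⟨k3a, hz3⟩)
    · rcases hw'2 u hua huw' with ⟨h, _⟩ | ⟨k2a, k2w'⟩ | ⟨_, k3w'⟩
      · exact absurd h hnot1
      · exact Or.inr (Or.inl ⟨k2a, t2 hz2w' k2w'⟩)
      · exact Or.inr (Or.inr ⟨h3a, t3 hz3w h3w⟩)
  refine ⟨ne2 hlt, fun z hzw hzw' => ?_⟩
  rcases eq_or_ne z a₁ with rfl | hza
  · exact Or.inl ⟨hR.top₁ w hne_w.symm, hR.top₁ w' hne_w'.symm⟩
  have hnot1 : ¬ l₁.lt a₁ z := as1 (hR.top₁ z hza)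
  rcases hw2 z hza hzw with ⟨h, _⟩ | ⟨h2a, h2w⟩ | ⟨h3a, h3w⟩
  · exact absurd h hnot1
  · rcases hw'2 z hza hzw' with ⟨h, _⟩ | ⟨_, k2w'⟩ | ⟨k3a, k3w'⟩
    · exact absurd h hnot1
    · exact Or.inr (Or.inl ⟨h2w, k2w'⟩)
    · rcases tri2 w' z with h | h | h
      · exact Or.inr (Or.inl ⟨h2w, h⟩)
      · exact absurd h hzw'.symm
      · rcases tri3 w z with h' | h' | h'
        · exact Or.inr (Or.inr ⟨h', k3w'⟩)
        · exact absurd h' hzw.symm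
        · exact absurd (show z ∈ B from ⟨h2a, h2w, h, k3a, k3w', h'⟩) (hBempty z)
  · rcases hw'2 z hza hzw' with ⟨h, _⟩ | ⟨_, k2w'⟩ | ⟨_, k3w'⟩
    · exact absurd h hnot1
    · exact Or.inr (Or.inl ⟨t2 hlt k2w', k2w'⟩)
    · exact Or.inr (Or.inr ⟨h3w, k3w'⟩)
end

section
/- Let R = (<₁, <₂, <₃) be a standard representation of a finite set V with |V| ≥ 4, with <ᵢ-maximum elements a₁, a₂, a₃, and let b be the <₁-maximum element of V \ {a₁}. Let w₋ be the <₂-largest neighbor of a₁ in Σ₂(R) satisfying w₋ <₂ b, and let w₊ be the <₂-smallest neighbor of a₁ in Σ₂(R) satisfying b <₂ w₊. Then every neighbor z of b in Σ₂(R) with z ∉ {a₁, w₋, w₊} satisfies b <₂ z <₂ w₊ and b <₃ z <₃ w₋. -/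
open SimpleGraph

variable {V : Type*}

/-- With b the <₁-maximum of V \ {a₁}, wlo the <₂-largest neighbor of a₁
below b and whi the <₂-smallest neighbor of a₁ above b, every neighbor z of b other
than a₁, wlo, whi satisfies b <₂ z <₂ whi and b <₃ z <₃ wlo. -/
theorem stmt7 {V : Type*} [Fintype V] (hV : 4 ≤ Fintype.card V)
    (l₁ l₂ l₃ : LinearOrder V) (a₁ a₂ a₃ : V)
    (hR : IsStdRep l₁ l₂ l₃ a₁ a₂ a₃)
    (b : V) (hba : b ≠ a₁) (hb : ∀ x, x ≠ a₁ → x ≠ b → l₁.lt x b)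
    (wlo : V) (hwm : (Sigma2 l₁ l₂ l₃).Adj a₁ wlo ∧ l₂.lt wlo b ∧
      ∀ w, (Sigma2 l₁ l₂ l₃).Adj a₁ w → l₂.lt w b → w ≠ wlo → l₂.lt w wlo)
    (whi : V) (hwp : (Sigma2 l₁ l₂ l₃).Adj a₁ whi ∧ l₂.lt b whi ∧
      ∀ w, (Sigma2 l₁ l₂ l₃).Adj a₁ w → l₂.lt b w → w ≠ whi → l₂.lt whi w)
    (z : V) (hz : (Sigma2 l₁ l₂ l₃).Adj b z)
    (hz₁ : z ≠ a₁) (hzm : z ≠ wlo) (hzp : z ≠ whi) :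
    (l₂.lt b z ∧ l₂.lt z whi) ∧ (l₃.lt b z ∧ l₃.lt z wlo) := by
  have asym : ∀ (l : LinearOrder V) {x y : V}, l.lt x y → l.lt y x → False := by
    intro l x y h h'; letI := l; exact absurd h (lt_asymm h')
  have irr : ∀ (l : LinearOrder V) {x : V}, l.lt x x → False := fun l x h => asym l h h
  have tri : ∀ (l : LinearOrder V) {x y : V}, x ≠ y → l.lt x y ∨ l.lt y x := by
    intro l x y h; letI := l; exact lt_or_gt_of_ne h
  have ltt : ∀ (l : LinearOrder V) {x y z : V}, l.lt x y → l.lt y z → l.lt x z := by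
    intro l x y z h h'; letI := l; exact lt_trans h h'
  obtain ⟨hadjm, hm_lt, hm_max⟩ := hwm
  obtain ⟨hadjp, hp_lt, hp_min⟩ := hwp
  have hAm := hadjm; have hAp := hadjp
  obtain ⟨hbz, hadj⟩ := hz
  obtain ⟨hma, hmf⟩ := hadjm
  obtain ⟨hpa, hpf⟩ := hadjp
  have hwlo_ne_b : wlo ≠ b := fun h => irr l₂ (h ▸ hm_lt)
  have hwhi_ne_b : whi ≠ b := fun h => irr l₂ (h ▸ hp_lt)
  -- from b ~ z at wlo : b <₃ wlo and z <₃ wlo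
  have h1 := hadj wlo hwlo_ne_b (Ne.symm hzm)
  have hb3wlo : l₃.lt b wlo ∧ l₃.lt z wlo := by
    rcases h1 with ⟨h, _⟩ | ⟨h, _⟩ | h
    · exact absurd h (fun h' => asym l₁ h' (hb wlo (Ne.symm hma) hwlo_ne_b))
    · exact absurd h (fun h' => asym l₂ h' hm_lt)
    · exact h
  have hz3wlo : l₃.lt z wlo := hb3wlo.2
  -- from a₁ ~ whi at b : a₁ <₃ b and whi <₃ b
  have h2 := hpf b hba (Ne.symm hwhi_ne_b)
  have ha3b : l₃.lt a₁ b ∧ l₃.lt whi b := by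
    rcases h2 with ⟨h, _⟩ | ⟨_, h⟩ | h
    · exact absurd h (fun h' => asym l₁ h' (hR.top₁ b hba))
    · exact absurd h (fun h' => asym l₂ h' hp_lt)
    · exact h
  -- from b ~ z at whi : z <₂ whi
  have h3 := hadj whi hwhi_ne_b (Ne.symm hzp)
  have hz2whi : l₂.lt z whi := by
    rcases h3 with ⟨h, _⟩ | ⟨_, h⟩ | ⟨h, _⟩
    · exact absurd h (fun h' => asym l₁ h' (hb whi (Ne.symm hpa) hwhi_ne_b))
    · exact h
    · exact absurd h (fun h' => asym l₃ h' ha3b.2)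
  -- a₁ <₂ b
  have ha2b : l₂.lt a₁ b := by
    rcases tri l₂ (Ne.symm hba) with h | h
    · exact h
    · exact absurd (hR.a₁_small₂ wlo b (ltt l₂ hm_lt h) h) hwlo_ne_b
  -- b <₂ z
  have hb2z : l₂.lt b z := by
    rcases tri l₂ hbz with h | h
    · exact h
    · exfalso
      -- a₁ ~ wlo at z : a₁ <₂ z and wlo <₂ z
      have h4 := hmf z hz₁ hzm
      have ha2z : l₂.lt a₁ z ∧ l₂.lt wlo z := by
        rcases h4 with ⟨h', _⟩ | h' | ⟨_, h'⟩
        · exact absurd h' (fun h'' => asym l₁ h'' (hR.top₁ z hz₁))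
        · exact h'
        · exact absurd h' (fun h'' => asym l₃ h'' hz3wlo)
      -- z is adjacent to a₁
      have hAz : (Sigma2 l₁ l₂ l₃).Adj a₁ z := by
        refine ⟨Ne.symm hz₁, fun u hu_a hu_z => ?_⟩
        by_cases hub : u = b
        · subst hub; exact Or.inr (Or.inl ⟨ha2b, h⟩)
        · rcases hadj u hub hu_z with ⟨h', _⟩ | ⟨hbu, hzu⟩ | ⟨hbu, hzu⟩
          · exact absurd h' (fun h'' => asym l₁ h'' (hb u hu_a hub))
          · refine Or.inr (Or.inl ⟨?_, hzu⟩)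
            rcases tri l₂ (Ne.symm hu_a) with h' | h'
            · exact h'
            · exact absurd (ltt l₂ (ltt l₂ h' ha2z.1) hzu) (fun h'' => irr l₂ h'')
          · refine Or.inr (Or.inr ⟨?_, hzu⟩)
            rcases tri l₃ (Ne.symm hu_a) with h' | h'
            · exact h'
            · exact absurd (hR.a₁_small₃ z b (ltt l₃ hzu h') (ltt l₃ hbu h')) (Ne.symm hbz)
      exact asym l₂ ha2z.2 (hm_max z hAz h hzm)
  -- b <₃ z
  have hb3z : l₃.lt b z := by
    rcases tri l₃ hbz with h | h
    · exact h
    · exfalso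
      -- z is adjacent to a₁
      have hAz : (Sigma2 l₁ l₂ l₃).Adj a₁ z := by
        refine ⟨Ne.symm hz₁, fun u hu_a hu_z => ?_⟩
        by_cases hub : u = b
        · subst hub; exact Or.inr (Or.inr ⟨ha3b.1, h⟩)
        · rcases hadj u hub hu_z with ⟨h', _⟩ | ⟨hbu, hzu⟩ | ⟨hbu, hzu⟩
          · exact absurd h' (fun h'' => asym l₁ h'' (hb u hu_a hub))
          · exact Or.inr (Or.inl ⟨ltt l₂ ha2b hbu, hzu⟩)
          · refine Or.inr (Or.inr ⟨?_, hzu⟩)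
            rcases tri l₃ (Ne.symm hu_a) with h' | h'
            · exact h'
            · exact absurd (hR.a₁_small₃ z b (ltt l₃ hzu h') (ltt l₃ hbu h')) (Ne.symm hbz)
      exact asym l₂ hz2whi (hp_min z hAz hb2z hzp)
  exact ⟨⟨hb2z, hz2whi⟩, ⟨hb3z, hz3wlo⟩⟩
end

section
/- Let R = (<₁, <₂, <₃) be a standard representation of a finite set V with |V| ≥ 4, with <ᵢ-maximum elements a₁, a₂, a₃, let b be the <₁-maximum element of V \ {a₁}, and let R' be the standard representation of V' = V \ {b} obtained by restricting each <ᵢ to V'. Then for all distinct s, t ∈ V', the pair st is an edge of Σ₂(R') if and only if either st is an edge of Σ₂(R), or one of s, t equals a₁ and the other is adjacent to b in Σ₂(R). (That is, Σ₂(R') is the graph obtained from Σ₂(R) by contracting the edge a₁b and labelling the new vertex a₁.) -/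
open SimpleGraph

variable {V : Type*}

lemma lin_trich (l : LinearOrder V) {x y : V} (h : x ≠ y) : l.lt x y ∨ l.lt y x := by
  rcases @lt_trichotomy V l x y with h1|h1|h1
  · exact Or.inl h1
  · exact absurd h1 h
  · exact Or.inr h1

lemma lin_trans (l : LinearOrder V) {x y z : V} (h1 : l.lt x y) (h2 : l.lt y z) : l.lt x z :=
  @lt_trans V _ x y z h1 h2

lemma lin_asymm (l : LinearOrder V) {x y : V} (h1 : l.lt x y) : ¬ l.lt y x :=
  @lt_asymm V _ x y h1

lemma sigma2_adj (l₁ l₂ l₃ : LinearOrder V) (x y : V) :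
    (Sigma2 l₁ l₂ l₃).Adj x y ↔ x ≠ y ∧ ∀ z, z ≠ x → z ≠ y →
      (l₁.lt x z ∧ l₁.lt y z) ∨ (l₂.lt x z ∧ l₂.lt y z) ∨ (l₃.lt x z ∧ l₃.lt y z) := Iff.rfl

/-- Key lemma for the backward direction, one order at a time (applied with `l ∈ {l₂, l₃}`). -/
lemma back_key (l : LinearOrder V) (a₁ b : V) (hsm : AmongTwoSmallest l a₁)
    {z t : V} (hza : z ≠ a₁) (h1 : l.lt b z) (h2 : l.lt t z) :
    l.lt a₁ z ∧ l.lt t z := by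
  refine ⟨?_, h2⟩
  rcases lin_trich l hza with h | h
  · exact absurd (hsm b z (lin_trans l h1 h) h) (fun e => lin_asymm l h1 (e ▸ h1))
  · exact h

/-- Backward direction, case `s = a₁` and `b` adjacent to `t`. -/
lemma back_a₁ (l₁ l₂ l₃ : LinearOrder V) (a₁ b : V)
    (hsm₂ : AmongTwoSmallest l₂ a₁) (hsm₃ : AmongTwoSmallest l₃ a₁)
    (hb : ∀ x, x ≠ a₁ → x ≠ b → l₁.lt x b)
    {t z : V} (hzb : z ≠ b) (hza : z ≠ a₁) (hzt : z ≠ t)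
    (hadj : (Sigma2 l₁ l₂ l₃).Adj b t) :
    (l₁.lt a₁ z ∧ l₁.lt t z) ∨ (l₂.lt a₁ z ∧ l₂.lt t z) ∨ (l₃.lt a₁ z ∧ l₃.lt t z) := by
  rcases hadj.2 z hzb hzt with ⟨h1, _⟩ | h | h
  · exact absurd (hb z hza hzb) (lin_asymm l₁ h1)
  · exact Or.inr (Or.inl (back_key l₂ a₁ b hsm₂ hza h.1 h.2))
  · exact Or.inr (Or.inr (back_key l₃ a₁ b hsm₃ hza h.1 h.2))

/-- Forward direction key step: if `a₁` and `t` are both below `z` in `l` but the pair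
`(a₁, t)` is not jointly below `b` in `l`, then `b < z` in `l`. -/
lemma fwd_key (l : LinearOrder V) (a₁ b : V) {t z : V} (hzb : z ≠ b) (htb : t ≠ b)
    (hnc : ¬ (l.lt a₁ b ∧ l.lt t b)) (h1 : l.lt a₁ z) (h2 : l.lt t z) :
    l.lt b z ∧ l.lt t z := by
  refine ⟨?_, h2⟩
  rcases lin_trich l hzb with h | h
  · exfalso
    have hab : l.lt a₁ b := lin_trans l h1 h
    rcases lin_trich l htb with h' | h'
    · exact hnc ⟨hab, h'⟩
    · exact lin_asymm l h' (lin_trans l h2 h)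
  · exact h

/-- Forward direction, producing `Adj b t` when `s = a₁` and `b` is not jointly covered. -/
lemma fwd_a₁ (l₁ l₂ l₃ : LinearOrder V) (a₁ b : V) (hba : b ≠ a₁)
    (htop : IsMaxOf l₁ a₁)
    {t : V} (htb : t ≠ b) (hta : t ≠ a₁)
    (hcov : ∀ z, z ≠ b → z ≠ a₁ → z ≠ t →
      (l₁.lt a₁ z ∧ l₁.lt t z) ∨ (l₂.lt a₁ z ∧ l₂.lt t z) ∨ (l₃.lt a₁ z ∧ l₃.lt t z))
    (hnc : ¬ ((l₁.lt a₁ b ∧ l₁.lt t b) ∨ (l₂.lt a₁ b ∧ l₂.lt t b) ∨ (l₃.lt a₁ b ∧ l₃.lt t b))) :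
    (Sigma2 l₁ l₂ l₃).Adj b t := by
  have hnc₂ : ¬ (l₂.lt a₁ b ∧ l₂.lt t b) := fun h => hnc (Or.inr (Or.inl h))
  have hnc₃ : ¬ (l₃.lt a₁ b ∧ l₃.lt t b) := fun h => hnc (Or.inr (Or.inr h))
  refine ⟨Ne.symm htb, fun z hzb hzt => ?_⟩
  by_cases hza : z = a₁
  · subst hza
    exact Or.inl ⟨htop b hba, htop t hta⟩
  · rcases hcov z hzb hza hzt with ⟨h1, _⟩ | h | h
    · exact absurd h1 (lin_asymm l₁ (htop z hza))
    · exact Or.inr (Or.inl (fwd_key l₂ a₁ b hzb htb hnc₂ h.1 h.2))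
    · exact Or.inr (Or.inr (fwd_key l₃ a₁ b hzb htb hnc₃ h.1 h.2))

/-- With b the <₁-maximum of V \ {a₁} and R' the restriction of R to
V' = V \ {b}: distinct s, t ∈ V' are adjacent in Σ₂(R') iff st is an edge of Σ₂(R), or
one of s, t is a₁ and the other is adjacent to b in Σ₂(R). (Σ₂(R') is obtained from
Σ₂(R) by contracting the edge a₁b, labelling the new vertex a₁.) -/
theorem stmt9 {V : Type*} [Fintype V] (hV : 4 ≤ Fintype.card V)
    (l₁ l₂ l₃ : LinearOrder V) (a₁ a₂ a₃ : V)
    (hR : IsStdRep l₁ l₂ l₃ a₁ a₂ a₃)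
    (b : V) (hba : b ≠ a₁) (hb : ∀ x, x ≠ a₁ → x ≠ b → l₁.lt x b)
    (s t : V) (hs : s ≠ b) (ht : t ≠ b) (hst : s ≠ t) :
    (Sigma2 (restrictOrder l₁ b) (restrictOrder l₂ b) (restrictOrder l₃ b)).Adj
        ⟨s, hs⟩ ⟨t, ht⟩ ↔
      (Sigma2 l₁ l₂ l₃).Adj s t ∨
        (s = a₁ ∧ (Sigma2 l₁ l₂ l₃).Adj b t) ∨
        (t = a₁ ∧ (Sigma2 l₁ l₂ l₃).Adj b s) := by
  constructor
  · rintro ⟨hne, hcov⟩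
    have hcov' : ∀ z, z ≠ b → z ≠ s → z ≠ t →
        (l₁.lt s z ∧ l₁.lt t z) ∨ (l₂.lt s z ∧ l₂.lt t z) ∨ (l₃.lt s z ∧ l₃.lt t z) :=
      fun z hzb hzs hzt =>
        hcov ⟨z, hzb⟩ (fun e => hzs (congrArg Subtype.val e))
          (fun e => hzt (congrArg Subtype.val e))
    by_cases hcb : (l₁.lt s b ∧ l₁.lt t b) ∨ (l₂.lt s b ∧ l₂.lt t b) ∨ (l₃.lt s b ∧ l₃.lt t b)
    · left
      refine ⟨hst, fun z hzs hzt => ?_⟩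
      by_cases hzb : z = b
      · exact hzb ▸ hcb
      · exact hcov' z hzb hzs hzt
    · by_cases hsa : s = a₁
      · subst hsa
        exact Or.inr (Or.inl ⟨rfl, fwd_a₁ l₁ l₂ l₃ s b hba hR.top₁ ht (Ne.symm hst)
          (fun z hzb hza hzt => hcov' z hzb hza hzt) hcb⟩)
      · by_cases hta : t = a₁
        · subst hta
          refine Or.inr (Or.inr ⟨rfl, fwd_a₁ l₁ l₂ l₃ t b hba hR.top₁ hs hsa ?_ ?_⟩)
          · intro z hzb hza hzs
            rcases hcov' z hzb hzs hza with h | h | h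
            · exact Or.inl ⟨h.2, h.1⟩
            · exact Or.inr (Or.inl ⟨h.2, h.1⟩)
            · exact Or.inr (Or.inr ⟨h.2, h.1⟩)
          · intro hc
            exact hcb (by tauto)
        · exact absurd (Or.inl ⟨hb s hsa hs, hb t hta ht⟩) hcb
  · intro h
    refine ⟨fun e => hst (congrArg Subtype.val e), fun z hzs hzt => ?_⟩
    have hzs' : z.val ≠ s := fun e => hzs (Subtype.ext e)
    have hzt' : z.val ≠ t := fun e => hzt (Subtype.ext e)
    rcases h with hadj | ⟨rfl, hadj⟩ | ⟨rfl, hadj⟩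
    · exact hadj.2 z.val hzs' hzt'
    · exact back_a₁ l₁ l₂ l₃ s b hR.a₁_small₂ hR.a₁_small₃ hb z.2 hzs' hzt' hadj
    · rcases back_a₁ l₁ l₂ l₃ t b hR.a₁_small₂ hR.a₁_small₃ hb z.2 hzt' hzs' hadj
        with h | h | h
      · exact Or.inl ⟨h.2, h.1⟩
      · exact Or.inr (Or.inl ⟨h.2, h.1⟩)
      · exact Or.inr (Or.inr ⟨h.2, h.1⟩)
end

section
/- Let R = (<₁, <₂, <₃) be a standard representation of a finite set V with |V| ≥ 4, with <ᵢ-maximum elements a₁, a₂, a₃, let b be the <₁-maximum element of V \ {a₁}, and let R' be the standard representation of V' = V \ {b} obtained by restricting each <ᵢ to V'. If st is an edge of Σ₂(R') that is not an edge of Σ₂(R), then one of s, t equals a₁ and the other one is adjacent to b in Σ₂(R). -/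
open SimpleGraph

variable {V : Type*}

private lemma LO.trans {V : Type*} (l : LinearOrder V) {x y z : V}
    (h1 : l.lt x y) (h2 : l.lt y z) : l.lt x z := by
  letI := l; exact lt_trans h1 h2

private lemma LO.resolve {V : Type*} (l : LinearOrder V) {x y : V}
    (h : x ≠ y) (h2 : ¬ l.lt x y) : l.lt y x := by
  letI := l; exact (h.lt_or_gt).resolve_left h2

/-- Auxiliary: the case `s = a₁` of stmt11. -/
private lemma stmt11_aux {V : Type*}
    (l₁ l₂ l₃ : LinearOrder V) (a₁ a₂ a₃ : V)
    (hR : IsStdRep l₁ l₂ l₃ a₁ a₂ a₃)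
    (b : V) (hba : b ≠ a₁)
    (t : V) (hbs : b ≠ a₁) (ht : t ≠ b) (hta : t ≠ a₁)
    (hadj : ∀ z : V, z ≠ b → z ≠ a₁ → z ≠ t →
      (l₁.lt a₁ z ∧ l₁.lt t z) ∨ (l₂.lt a₁ z ∧ l₂.lt t z) ∨ (l₃.lt a₁ z ∧ l₃.lt t z))
    (key : ¬((l₁.lt a₁ b ∧ l₁.lt t b) ∨ (l₂.lt a₁ b ∧ l₂.lt t b) ∨ (l₃.lt a₁ b ∧ l₃.lt t b))) :
    (Sigma2 l₁ l₂ l₃).Adj b t := by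
  have k2 : ¬(l₂.lt a₁ b ∧ l₂.lt t b) := fun h => key (Or.inr (Or.inl h))
  have k3 : ¬(l₃.lt a₁ b ∧ l₃.lt t b) := fun h => key (Or.inr (Or.inr h))
  refine ⟨Ne.symm ht, fun z hzb hzt => ?_⟩
  by_cases hza : z = a₁
  · subst hza
    exact Or.inl ⟨hR.top₁ b hba, hR.top₁ t hta⟩
  · rcases hadj z hzb hza hzt with ⟨h1, _⟩ | ⟨h1, h2⟩ | ⟨h1, h2⟩
    · exact absurd (hR.top₁ z hza) (by letI := l₁; exact lt_asymm h1)
    · refine Or.inr (Or.inl ⟨?_, h2⟩)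
      by_cases hab : l₂.lt a₁ b
      · have htb : ¬ l₂.lt t b := fun h => k2 ⟨hab, h⟩
        exact LO.trans l₂ (LO.resolve l₂ ht htb) h2
      · exact LO.trans l₂ (LO.resolve l₂ (Ne.symm hba) hab) h1
    · refine Or.inr (Or.inr ⟨?_, h2⟩)
      by_cases hab : l₃.lt a₁ b
      · have htb : ¬ l₃.lt t b := fun h => k3 ⟨hab, h⟩
        exact LO.trans l₃ (LO.resolve l₃ ht htb) h2
      · exact LO.trans l₃ (LO.resolve l₃ (Ne.symm hba) hab) h1

/-- With b the <₁-maximum of V \ {a₁} and R' the restriction of R to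
V' = V \ {b}: if st is an edge of Σ₂(R') but not of Σ₂(R), then one of s, t is a₁ and
the other is adjacent to b in Σ₂(R). -/
theorem stmt11 {V : Type*} [Fintype V] (hV : 4 ≤ Fintype.card V)
    (l₁ l₂ l₃ : LinearOrder V) (a₁ a₂ a₃ : V)
    (hR : IsStdRep l₁ l₂ l₃ a₁ a₂ a₃)
    (b : V) (hba : b ≠ a₁) (hb : ∀ x, x ≠ a₁ → x ≠ b → l₁.lt x b)
    (s t : V) (hs : s ≠ b) (ht : t ≠ b)
    (hadj' : (Sigma2 (restrictOrder l₁ b) (restrictOrder l₂ b)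
      (restrictOrder l₃ b)).Adj ⟨s, hs⟩ ⟨t, ht⟩)
    (hnadj : ¬(Sigma2 l₁ l₂ l₃).Adj s t) :
    (s = a₁ ∧ (Sigma2 l₁ l₂ l₃).Adj b t) ∨
      (t = a₁ ∧ (Sigma2 l₁ l₂ l₃).Adj b s) := by
  
  obtain ⟨hst', hadj⟩ := hadj'
  have hst : s ≠ t := fun h => hst' (Subtype.ext h)
  -- The only witness breaking adjacency of s,t in Σ₂(R) must be b.
  have key : ¬((l₁.lt s b ∧ l₁.lt t b) ∨ (l₂.lt s b ∧ l₂.lt t b) ∨ (l₃.lt s b ∧ l₃.lt t b)) := by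
    intro h
    apply hnadj
    refine ⟨hst, fun z hzs hzt => ?_⟩
    by_cases hzb : z = b
    · subst hzb; exact h
    · exact hadj ⟨z, hzb⟩ (fun he => hzs (congrArg Subtype.val he))
        (fun he => hzt (congrArg Subtype.val he))
  have h1 : ¬(l₁.lt s b ∧ l₁.lt t b) := fun h => key (Or.inl h)
  have hsa : s = a₁ ∨ t = a₁ := by
    by_contra hc
    push_neg at hc
    exact h1 ⟨hb s hc.1 hs, hb t hc.2 ht⟩
  rcases hsa with hsa | hta
  · subst hsa
    have hta : t ≠ s := hst.symm
    exact Or.inl ⟨rfl, stmt11_aux l₁ l₂ l₃ s a₂ a₃ hR b hba t hba ht hta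
      (fun z hzb hza hzt => hadj ⟨z, hzb⟩ (fun he => hza (congrArg Subtype.val he))
        (fun he => hzt (congrArg Subtype.val he))) key⟩
  · subst hta
    have hsa : s ≠ t := hst
    refine Or.inr ⟨rfl, stmt11_aux l₁ l₂ l₃ t a₂ a₃ hR b hba s hba hs hsa ?_ ?_⟩
    · intro z hzb hza hzt
      rcases hadj ⟨z, hzb⟩ (fun he => hzt (congrArg Subtype.val he))
        (fun he => hza (congrArg Subtype.val he)) with h | h | h
      · exact Or.inl ⟨h.2, h.1⟩
      · exact Or.inr (Or.inl ⟨h.2, h.1⟩)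
      · exact Or.inr (Or.inr ⟨h.2, h.1⟩)
    · intro h
      apply key
      tauto
end
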